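/- Let h > 0, ω > 0, and c > 0. Define the weights α_{-1} = ω(h²(2ω−5) − 3c²)/(3c²h(ω+1)), α_0 = (ω−1)/(hω) − 2h(ω−1)/(3c²), α_{+1} = (h²(5ω−2)/c² + 3/ω)/(3h(ω+1)). Then for every four-times continuously differentiable function f : ℝ → ℝ and every point x, the approximation error α_{-1} f(x−h) + α_0 f(x) + α_{+1} f(x+ωh) − f'(x) equals (ω/6)(6 f'(x)/c² + f'''(x)) h² + O(h³) as h → 0 (with ω, c fixed). -/

import Mathlib

open Filter Asymptotics Topology Set

/-- If `g` is `C^{n+1}` and all derivatives up to order `n` vanish at `0`,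
then `g = O(t^{n+1})` near `0`. -/
lemma rbf_taylor_aux : ∀ (n : ℕ) (g : ℝ → ℝ), ContDiff ℝ (n + 1) g →
    (∀ k ≤ n, iteratedDeriv k g 0 = 0) →
    g =O[𝓝 (0 : ℝ)] fun t => t ^ (n + 1) := by
  intro n
  induction n with
  | zero =>
    intro g hg h0
    have hd : DifferentiableAt ℝ g 0 :=
      (hg.differentiable (by norm_num)).differentiableAt
    have g0 : g 0 = 0 := by simpa using h0 0 le_rfl
    have := hd.isBigO_sub
    simpa [g0] using this
  | succ n ih =>
    intro g hg h0
    have hgcast : ContDiff ℝ ((n : WithTop ℕ∞) + 1 + 1) g := by exact_mod_cast hg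
    have hg' : ContDiff ℝ ((n : WithTop ℕ∞) + 1) (deriv g) :=
      (contDiff_succ_iff_deriv.mp hgcast).2.2
    have hg'2 : ContDiff ℝ (n + 1) (deriv g) := by exact_mod_cast hg'
    have h0' : ∀ k ≤ n, iteratedDeriv k (deriv g) 0 = 0 := by
      intro k hk
      rw [← iteratedDeriv_succ']
      exact h0 (k + 1) (by omega)
    obtain ⟨C, hC⟩ := (ih (deriv g) hg'2 h0').bound
    obtain ⟨ε, hε, hball⟩ := Metric.eventually_nhds_iff.mp hC
    have hdiff : ∀ s : ℝ, HasDerivAt g (deriv g s) s := fun s =>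
      ((hg.differentiable (by norm_num)) s).hasDerivAt
    have g0 : g 0 = 0 := by simpa using h0 0 (Nat.zero_le _)
    rw [isBigO_iff]
    refine ⟨|C|, Metric.eventually_nhds_iff.mpr ⟨ε, hε, ?_⟩⟩
    intro t ht
    rw [Real.dist_eq, sub_zero] at ht
    have hbnd : ∀ s : ℝ, |s| ≤ |t| → ‖deriv g s‖ ≤ |C| * |t| ^ (n + 1) := by
      intro s hs
      have h1 : ‖deriv g s‖ ≤ C * ‖s ^ (n + 1)‖ := hball (by
        rw [Real.dist_eq, sub_zero]; exact lt_of_le_of_lt hs ht)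
      calc ‖deriv g s‖ ≤ C * ‖s ^ (n + 1)‖ := h1
        _ ≤ |C| * ‖s ^ (n + 1)‖ :=
          mul_le_mul_of_nonneg_right (le_abs_self C) (norm_nonneg _)
        _ ≤ |C| * |t| ^ (n + 1) := by
          rw [norm_pow, Real.norm_eq_abs]
          exact mul_le_mul_of_nonneg_left
            (pow_le_pow_left₀ (abs_nonneg s) hs _) (abs_nonneg C)
    have hnorm : ‖t ^ (n + 1 + 1)‖ = |t| ^ (n + 2) := by
      rw [Real.norm_eq_abs, abs_pow]
    rcases le_or_gt 0 t with htpos | htneg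
    · have key := norm_image_sub_le_of_norm_deriv_le_segment'
        (f := g) (f' := deriv g) (a := 0) (b := t) (C := |C| * |t| ^ (n + 1))
        (fun s _ => (hdiff s).hasDerivWithinAt)
        (fun s hs => hbnd s (by
          rw [abs_of_nonneg hs.1, abs_of_nonneg htpos]; exact le_of_lt hs.2))
        t (by constructor <;> simp [htpos])
      rw [g0, sub_zero, sub_zero] at key
      calc ‖g t‖ ≤ |C| * |t| ^ (n + 1) * t := key
        _ = |C| * ‖t ^ (n + 1 + 1)‖ := by
            rw [hnorm, abs_of_nonneg htpos]; ring
    · have key := norm_image_sub_le_of_norm_deriv_le_segment'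
        (f := g) (f' := deriv g) (a := t) (b := 0) (C := |C| * |t| ^ (n + 1))
        (fun s _ => (hdiff s).hasDerivWithinAt)
        (fun s hs => hbnd s (by
          rw [abs_of_nonpos (le_of_lt hs.2), abs_of_neg htneg]
          exact neg_le_neg hs.1))
        0 (by constructor <;> simp [le_of_lt htneg])
      rw [g0, zero_sub, norm_neg, zero_sub] at key
      calc ‖g t‖ ≤ |C| * |t| ^ (n + 1) * (-t) := key
        _ = |C| * ‖t ^ (n + 1 + 1)‖ := by
            rw [hnorm, abs_of_neg htneg]; ring

set_option maxHeartbeats 2000000 in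
/-- RBF--FD first-derivative approximation on the non-uniform stencil
`{x - h, x, x + ω*h}` with Gaussian shape parameter `c`: the error equals
`(ω/6)(6 f'(x)/c² + f'''(x)) h² + O(h³)` as `h → 0⁺`. -/
theorem rbf_fd_first_derivative_error
    (ω c : ℝ) (hω : 0 < ω) (hc : 0 < c)
    (f : ℝ → ℝ) (hf : ContDiff ℝ 4 f) (x : ℝ) :
    (fun h : ℝ =>
        (ω * (h ^ 2 * (2 * ω - 5) - 3 * c ^ 2) / (3 * c ^ 2 * h * (ω + 1))) * f (x - h)
          + ((ω - 1) / (h * ω) - 2 * h * (ω - 1) / (3 * c ^ 2)) * f x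
          + ((h ^ 2 * (5 * ω - 2) / c ^ 2 + 3 / ω) / (3 * h * (ω + 1))) * f (x + ω * h)
          - deriv f x
          - (ω / 6) * (6 * deriv f x / c ^ 2 + iteratedDeriv 3 f x) * h ^ 2)
      =O[𝓝[>] (0 : ℝ)] fun h : ℝ => h ^ 3 := by
  set d0 := f x with hd0
  set d1 := deriv f x with hd1
  set d2 := iteratedDeriv 2 f x with hd2
  set d3 := iteratedDeriv 3 f x with hd3
  -- the Taylor polynomial and the remainder function
  set P : ℝ → ℝ := fun t => d0 + d1 * t + d2 / 2 * t ^ 2 + d3 / 6 * t ^ 3 with hP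
  set g : ℝ → ℝ := fun t => f (x + t) - P t with hg
  -- `g` is C⁴
  have hgC : ContDiff ℝ 4 g := by
    apply ContDiff.sub
    · exact hf.comp (contDiff_const.add contDiff_id)
    · fun_prop
  -- derivatives of the shifted function
  have hshift : ∀ k : ℕ, iteratedDeriv k (fun t => f (x + t)) 0 = iteratedDeriv k f x := by
    intro k
    rw [iteratedDeriv_comp_const_add k f x]
    simp
  -- derivatives of `g` at 0 vanish up to order 3
  have hfd : ∀ k : ℕ, k < 4 → ∀ t : ℝ,
      HasDerivAt (fun s => iteratedDeriv k f (x + s)) (iteratedDeriv (k + 1) f (x + t)) t := by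
    intro k hk t
    have hdk : DifferentiableAt ℝ (iteratedDeriv k f) (x + t) :=
      (hf.differentiable_iteratedDeriv k (by exact_mod_cast hk)) (x + t)
    have h1 : HasDerivAt (iteratedDeriv k f) (deriv (iteratedDeriv k f) (x + t)) (x + t) :=
      hdk.hasDerivAt
    have h2 := h1.comp t ((hasDerivAt_id t).const_add x)
    simp only [mul_one] at h2
    rw [iteratedDeriv_succ]
    exact h2
  -- explicit derivative chains for g
  have hgd : ∀ t : ℝ, HasDerivAt g (deriv f (x + t) - (d1 + d2 * t + d3 / 2 * t ^ 2)) t := by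
    intro t
    have hPd : HasDerivAt P (d1 + d2 * t + d3 / 2 * t ^ 2) t := by
      have h1 : HasDerivAt (fun s : ℝ => s) 1 t := hasDerivAt_id t
      have h2 : HasDerivAt (fun s : ℝ => s ^ 2) (2 * t) t := by simpa using hasDerivAt_pow 2 t
      have h3 : HasDerivAt (fun s : ℝ => s ^ 3) (3 * t ^ 2) t := by simpa using hasDerivAt_pow 3 t
      have := (((hasDerivAt_const t d0).add (h1.const_mul d1)).add
        (h2.const_mul (d2 / 2))).add (h3.const_mul (d3 / 6))
      exact this.congr_deriv (by ring)
    have hfd0 := hfd 0 (by norm_num) t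
    simp only [zero_add, iteratedDeriv_zero, iteratedDeriv_one] at hfd0
    exact hfd0.sub hPd
  have hg1d : ∀ t : ℝ, HasDerivAt (fun t => deriv f (x + t) - (d1 + d2 * t + d3 / 2 * t ^ 2))
      (iteratedDeriv 2 f (x + t) - (d2 + d3 * t)) t := by
    intro t
    have hPd : HasDerivAt (fun t : ℝ => d1 + d2 * t + d3 / 2 * t ^ 2) (d2 + d3 * t) t := by
      have h1 : HasDerivAt (fun s : ℝ => s) 1 t := hasDerivAt_id t
      have h2 : HasDerivAt (fun s : ℝ => s ^ 2) (2 * t) t := by simpa using hasDerivAt_pow 2 t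
      have := ((hasDerivAt_const t d1).add (h1.const_mul d2)).add (h2.const_mul (d3 / 2))
      exact this.congr_deriv (by ring)
    have hfd1 := hfd 1 (by norm_num) t
    simp only [iteratedDeriv_one] at hfd1
    exact hfd1.sub hPd
  have hg2d : ∀ t : ℝ, HasDerivAt (fun t => iteratedDeriv 2 f (x + t) - (d2 + d3 * t))
      (iteratedDeriv 3 f (x + t) - d3) t := by
    intro t
    have hPd : HasDerivAt (fun t : ℝ => d2 + d3 * t) d3 t := by
      have h1 : HasDerivAt (fun s : ℝ => s) 1 t := hasDerivAt_id t
      have := (hasDerivAt_const t d2).add (h1.const_mul d3)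
      exact this.congr_deriv (by ring)
    exact (hfd 2 (by norm_num) t).sub hPd
  have hdg : deriv g = fun t => deriv f (x + t) - (d1 + d2 * t + d3 / 2 * t ^ 2) :=
    funext fun t => (hgd t).deriv
  have hdg1 : deriv (fun t => deriv f (x + t) - (d1 + d2 * t + d3 / 2 * t ^ 2))
      = fun t => iteratedDeriv 2 f (x + t) - (d2 + d3 * t) :=
    funext fun t => (hg1d t).deriv
  have hdg2 : deriv (fun t => iteratedDeriv 2 f (x + t) - (d2 + d3 * t))
      = fun t => iteratedDeriv 3 f (x + t) - d3 :=
    funext fun t => (hg2d t).deriv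
  have h0 : ∀ k ≤ 3, iteratedDeriv k g 0 = 0 := by
    intro k hk
    interval_cases k
    · simp [g, P, hd0]
    · rw [iteratedDeriv_one, hdg]; simp [hd1]
    · rw [show (2 : ℕ) = 1 + 1 by rfl, iteratedDeriv_succ, iteratedDeriv_one, hdg, hdg1]
      simp [hd2]
    · rw [show (3 : ℕ) = 1 + 1 + 1 by rfl, iteratedDeriv_succ, iteratedDeriv_succ,
        iteratedDeriv_one, hdg, hdg1, hdg2]
      simp [hd3]
  have hgO : g =O[𝓝 (0 : ℝ)] fun t => t ^ 4 := by
    have := rbf_taylor_aux 3 g (by exact_mod_cast hgC) h0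
    exact this
  -- compose with h ↦ -h and h ↦ ω*h along 𝓝[>] 0
  have tneg : Tendsto (fun h : ℝ => -h) (𝓝[>] (0 : ℝ)) (𝓝 (0 : ℝ)) := by
    have : Tendsto (fun h : ℝ => -h) (𝓝 (0 : ℝ)) (𝓝 (-(0 : ℝ))) :=
      (continuous_neg.tendsto 0)
    simpa using this.mono_left nhdsWithin_le_nhds
  have tmul : Tendsto (fun h : ℝ => ω * h) (𝓝[>] (0 : ℝ)) (𝓝 (0 : ℝ)) := by
    have : Tendsto (fun h : ℝ => ω * h) (𝓝 (0 : ℝ)) (𝓝 (ω * 0)) :=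
      ((continuous_const.mul continuous_id).tendsto 0)
    simpa using this.mono_left nhdsWithin_le_nhds
  have hO1 : (fun h : ℝ => g (-h)) =O[𝓝[>] (0 : ℝ)] fun h : ℝ => h ^ 4 := by
    have h1 := hgO.comp_tendsto tneg
    have e : ((fun t : ℝ => t ^ 4) ∘ fun h : ℝ => -h) = fun h : ℝ => h ^ 4 := by
      funext h; simp only [Function.comp_apply]; ring
    rw [e] at h1
    exact h1
  have hO2 : (fun h : ℝ => g (ω * h)) =O[𝓝[>] (0 : ℝ)] fun h : ℝ => h ^ 4 := by
    have := hgO.comp_tendsto tmul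
    have h2 : (fun h : ℝ => (ω * h) ^ 4) =O[𝓝[>] (0 : ℝ)] fun h : ℝ => h ^ 4 := by
      have : (fun h : ℝ => (ω * h) ^ 4) = fun h : ℝ => ω ^ 4 * h ^ 4 := by
        funext h; ring
      rw [this]
      exact isBigO_const_mul_self _ _ _
    have e : ((fun t : ℝ => t ^ 4) ∘ fun h : ℝ => ω * h) = fun h : ℝ => (ω * h) ^ 4 := by
      funext h; simp only [Function.comp_apply]
    rw [e] at this
    exact this.trans h2
  -- O(1) coefficients
  have hφ : (fun h : ℝ => ω * (h ^ 2 * (2 * ω - 5) - 3 * c ^ 2) / (3 * c ^ 2 * (ω + 1)))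
      =O[𝓝[>] (0 : ℝ)] (fun _ : ℝ => (1 : ℝ)) := by
    apply Filter.Tendsto.isBigO_one
    exact ((Continuous.tendsto (by fun_prop) 0).mono_left nhdsWithin_le_nhds)
  have hψ : (fun h : ℝ => (h ^ 2 * (5 * ω - 2) / c ^ 2 + 3 / ω) / (3 * (ω + 1)))
      =O[𝓝[>] (0 : ℝ)] (fun _ : ℝ => (1 : ℝ)) := by
    apply Filter.Tendsto.isBigO_one
    exact ((Continuous.tendsto (by fun_prop) 0).mono_left nhdsWithin_le_nhds)
  have hinv : (fun h : ℝ => h⁻¹) =O[𝓝[>] (0 : ℝ)] (fun h : ℝ => h⁻¹) :=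
    isBigO_refl _ _
  have hmem : ∀ᶠ h in 𝓝[>] (0 : ℝ), (0 : ℝ) < h := self_mem_nhdsWithin
  -- A-term
  have hA : (fun h : ℝ =>
      (ω * (h ^ 2 * (2 * ω - 5) - 3 * c ^ 2) / (3 * c ^ 2 * h * (ω + 1))) * g (-h))
      =O[𝓝[>] (0 : ℝ)] fun h : ℝ => h ^ 3 := by
    have base := (hφ.mul hO1).mul hinv
    apply base.congr'
    · filter_upwards [hmem] with h hh
      have hne : h ≠ 0 := ne_of_gt hh
      first
      | (field_simp; ring_nf; tauto)
      | field_simp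
    · filter_upwards [hmem] with h hh
      have hne : h ≠ 0 := ne_of_gt hh
      first
      | (field_simp; ring_nf; tauto)
      | field_simp
  -- C-term
  have hCt : (fun h : ℝ =>
      ((h ^ 2 * (5 * ω - 2) / c ^ 2 + 3 / ω) / (3 * h * (ω + 1))) * g (ω * h))
      =O[𝓝[>] (0 : ℝ)] fun h : ℝ => h ^ 3 := by
    have base := (hψ.mul hO2).mul hinv
    apply base.congr'
    · filter_upwards [hmem] with h hh
      have hne : h ≠ 0 := ne_of_gt hh
      first
      | (field_simp; ring_nf; tauto)
      | field_simp
    · filter_upwards [hmem] with h hh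
      have hne : h ≠ 0 := ne_of_gt hh
      first
      | (field_simp; ring_nf; tauto)
      | field_simp
  -- E-term (exact polynomial part)
  have hE : (fun h : ℝ => d2 * (5 * ω * (ω - 1) / (6 * c ^ 2)) * h ^ 3
      + d3 * (ω * (5 * ω ^ 3 - 2 * ω ^ 2 - 2 * ω + 5) / (18 * c ^ 2 * (ω + 1))) * h ^ 4)
      =O[𝓝[>] (0 : ℝ)] fun h : ℝ => h ^ 3 := by
    apply IsBigO.add
    · have : (fun h : ℝ => d2 * (5 * ω * (ω - 1) / (6 * c ^ 2)) * h ^ 3)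
          = fun h : ℝ => (d2 * (5 * ω * (ω - 1) / (6 * c ^ 2))) * h ^ 3 := rfl
      rw [this]
      exact isBigO_const_mul_self _ _ _
    · have h4O3 : (fun h : ℝ => h ^ 4) =O[𝓝[>] (0 : ℝ)] fun h : ℝ => h ^ 3 := by
        have hid : (fun h : ℝ => h) =O[𝓝[>] (0 : ℝ)] (fun _ : ℝ => (1 : ℝ)) :=
          Filter.Tendsto.isBigO_one (F := ℝ)
            ((continuous_id.tendsto (0 : ℝ)).mono_left nhdsWithin_le_nhds)
        have := hid.mul (isBigO_refl (fun h : ℝ => h ^ 3) (𝓝[>] (0 : ℝ)))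
        apply this.congr'
        · filter_upwards with h; ring
        · filter_upwards with h; ring
      have := (isBigO_const_mul_self
        (d3 * (ω * (5 * ω ^ 3 - 2 * ω ^ 2 - 2 * ω + 5) / (18 * c ^ 2 * (ω + 1))))
        (fun h : ℝ => h ^ 4) (𝓝[>] (0 : ℝ))).trans h4O3
      exact (by simpa [mul_assoc] using this)
  -- put everything together
  have total := (hE.add hA).add hCt
  apply total.congr'
  swap
  · exact EventuallyEq.rfl
  · filter_upwards [hmem] with h hh
    have hne : h ≠ 0 := ne_of_gt hh
    have hcne : c ≠ 0 := ne_of_gt hc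
    have hωne : ω ≠ 0 := ne_of_gt hω
    have hω1 : ω + 1 ≠ 0 := by positivity
    have e1 : f (x - h) = g (-h) + P (-h) := by
      simp only [g]
      rw [show x + -h = x - h by ring]
      ring
    have e2 : f (x + ω * h) = g (ω * h) + P (ω * h) := by
      simp only [g]; ring
    rw [e1, e2]
    simp only [P]
    first
    | (field_simp; ring_nf; tauto)
    | (field_simp; ring_nf)
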